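/- arXiv:1101.3967 — 2 statements merged into one kernel-verified Lean document; each statement's English description precedes it below -/
import Mathlib

section
/- Let n ≥ 1, let B = B(0,1) be the open unit ball of ℝⁿ, and let a₁(t,y) = 1_{T_1 B}(t,y) · 1_{[1/2,1]}(t). Then for every 0 < p < ∞ there exist constants 0 < c ≤ C < ∞ depending only on n and p such that c ≤ ‖a₁‖_{T^{p,2}_1} ≤ C, and for every α ≥ 1, c α^{n/p} ≤ ‖a₁‖_{T^{p,2}_α} ≤ C α^{n/p}. -/
open MeasureTheory Metric Set Filter ENNReal

noncomputable section

/-- `ℝⁿ` as a Euclidean space. -/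
abbrev En (n : ℕ) : Type := EuclideanSpace ℝ (Fin n)

/-- `g` is (measurable and) locally square integrable on `(0,∞) × ℝⁿ`. -/
def LocSqInt (n : ℕ) (g : ℝ → En n → ℝ) : Prop :=
  Measurable (Function.uncurry g) ∧
  LocallyIntegrableOn (fun q : ℝ × En n => (g q.1 q.2) ^ 2)
    (Set.Ioi (0 : ℝ) ×ˢ (Set.univ : Set (En n)))

/-- The conical square function `A^{(α)} g (x)` of aperture `α`, with values in `[0,∞]`. -/
def conicalSq (n : ℕ) (α : ℝ) (g : ℝ → En n → ℝ) (x : En n) : ℝ≥0∞ :=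
  (∫⁻ t in Set.Ioi (0 : ℝ), ∫⁻ y,
      (ball x (α * t)).indicator (fun y => ENNReal.ofReal (|g t y| ^ 2 / t ^ (n + 1))) y) ^
    (1 / 2 : ℝ)

/-- The tent space quasi-norm `‖g‖_{T^{p,2}_α} = ‖A^{(α)} g‖_{L^p(ℝⁿ)}`, with values in `[0,∞]`. -/
def tentNorm (n : ℕ) (p α : ℝ) (g : ℝ → En n → ℝ) : ℝ≥0∞ :=
  (∫⁻ x, conicalSq n α g x ^ p) ^ (1 / p)

/-- The vertical square function `V g (x)`. -/
def vertSq (n : ℕ) (g : ℝ → En n → ℝ) (x : En n) : ℝ≥0∞ :=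
  (∫⁻ t in Set.Ioi (0 : ℝ), ENNReal.ofReal (|g t x| ^ 2 / t)) ^ (1 / 2 : ℝ)

/-- `‖V g‖_{L^p(ℝⁿ)}`, with values in `[0,∞]`. -/
def vertNorm (n : ℕ) (p : ℝ) (g : ℝ → En n → ℝ) : ℝ≥0∞ :=
  (∫⁻ x, vertSq n g x ^ p) ^ (1 / p)

/-- The tent `T_α B` of aperture `α` above the ball `B = B(x,r)`. -/
def tent (n : ℕ) (α : ℝ) (x : En n) (r : ℝ) : Set (ℝ × En n) :=
  {q | 0 < q.1 ∧ q.1 < r / α ∧ q.2 ∈ ball x (r - α * q.1)}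

/-- `∫_{T_α B} |g(t,y)|² dy dt / t`. -/
def tentIntegral (n : ℕ) (α : ℝ) (g : ℝ → En n → ℝ) (x : En n) (r : ℝ) : ℝ≥0∞ :=
  ∫⁻ q in tent n α x r, ENNReal.ofReal (|g q.1 q.2| ^ 2 / q.1)

/-- A `T^{p,2}_α`-atom associated with the ball `B(x,r)`: it is supported in the tent
`T_α B(x,r)` and satisfies `∫_{T_α B} |a|² dy dt/t ≤ α^{-n} |B|^{-(2/p - 1)}`. -/
def IsTentAtom (n : ℕ) (p α : ℝ) (a : ℝ → En n → ℝ) (x : En n) (r : ℝ) : Prop :=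
  (∀ t y, (t, y) ∉ tent n α x r → a t y = 0) ∧
  tentIntegral n α a x r ≤
    ENNReal.ofReal (α ^ (-(n : ℝ))) * volume (ball x r) ^ (-(2 / p - 1))

/-- The grand square function `G_λ g (x)` with exponent `nλ`. -/
def grandSq (n : ℕ) (l : ℝ) (g : ℝ → En n → ℝ) (x : En n) : ℝ≥0∞ :=
  (∫⁻ t in Set.Ioi (0 : ℝ), ∫⁻ y,
      ENNReal.ofReal ((t / (dist x y + t)) ^ ((n : ℝ) * l) * |g t y| ^ 2 / t ^ (n + 1))) ^
    (1 / 2 : ℝ)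

/-- The example `a₁(t,y) = 1_{T_1 B(0,1)}(t,y) · 1_{[1/2,1]}(t)`. -/
def a1Fun (n : ℕ) : ℝ → En n → ℝ := fun t y =>
  (tent n 1 (0 : En n) 1).indicator (fun _ => (1 : ℝ)) (t, y) *
    (Set.Icc (1 / 2 : ℝ) 1).indicator (fun _ => (1 : ℝ)) t

lemma a1_cases (n : ℕ) (t : ℝ) (y : En n) :
    a1Fun n t y = 0 ∨
      (a1Fun n t y = 1 ∧ 1/2 ≤ t ∧ t < 1 ∧ y ∈ ball (0 : En n) (1 - t)) := by
  by_cases h1 : (t, y) ∈ tent n 1 (0 : En n) 1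
  · by_cases h2 : t ∈ Set.Icc (1/2 : ℝ) 1
    · right
      obtain ⟨ht0, ht1, hy⟩ := id h1
      refine ⟨?_, h2.1, by simpa using ht1, by simpa using hy⟩
      rw [a1Fun]
      rw [Set.indicator_of_mem h1, Set.indicator_of_mem (h2 : t ∈ Set.Icc (1/2:ℝ) 1), mul_one]
    · left; rw [a1Fun, Set.indicator_of_notMem h2, mul_zero]
  · left; rw [a1Fun, Set.indicator_of_notMem h1, zero_mul]

lemma a1_eq_one (n : ℕ) {t : ℝ} {y : En n} (ht : 1/2 ≤ t) (ht1 : t < 1)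
    (hy : y ∈ ball (0 : En n) (1 - t)) : a1Fun n t y = 1 := by
  have h1 : (t, y) ∈ tent n 1 (0 : En n) 1 := by
    simp only [tent, Set.mem_setOf_eq]
    exact ⟨by linarith, by simpa using ht1, by simpa using hy⟩
  rw [a1Fun, Set.indicator_of_mem h1, Set.indicator_of_mem (Set.mem_Icc.mpr ⟨ht, ht1.le⟩), mul_one]

lemma conical_zero (n : ℕ) {α : ℝ} (hα : 1 ≤ α) {x : En n} (hx : α ≤ ‖x‖) :
    conicalSq n α (a1Fun n) x = 0 := by
  have hpt : ∀ (t : ℝ) (y : En n),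
      (ball x (α * t)).indicator
        (fun y => ENNReal.ofReal (|a1Fun n t y| ^ 2 / t ^ (n + 1))) y = 0 := by
    intro t y
    by_cases hy : y ∈ ball x (α * t)
    · rw [Set.indicator_of_mem hy]
      rcases a1_cases n t y with h | ⟨h, ht, ht1, hyb⟩
      · simp [h]
      · exfalso
        have h1 : dist x y < α * t := by rw [dist_comm]; exact mem_ball.mp hy
        have h2 : dist y (0 : En n) < 1 - t := mem_ball.mp hyb
        have h3 : ‖x‖ ≤ dist x y + dist y (0 : En n) := by
          rw [← dist_zero_right]; exact dist_triangle x y 0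
        nlinarith
    · rw [Set.indicator_of_notMem hy]
  rw [conicalSq]
  simp only [hpt, lintegral_zero]
  exact ENNReal.zero_rpow_of_pos (by norm_num)

lemma conical_upper (n : ℕ) {α : ℝ} (x : En n) :
    conicalSq n α (a1Fun n) x ≤
      (ENNReal.ofReal (2 ^ (n + 1)) * volume (ball (0 : En n) (1/2)) *
        ENNReal.ofReal (1/2)) ^ (1/2 : ℝ) := by
  rw [conicalSq]
  apply ENNReal.rpow_le_rpow _ (by norm_num : (0:ℝ) ≤ 1/2)
  have hne : ∀ t : ℝ,
      (Set.Icc (1/2:ℝ) 1).indicator (fun _ => ENNReal.ofReal (2^(n+1))) t ≠ ⊤ := by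
    intro t; by_cases h : t ∈ Set.Icc (1/2:ℝ) 1
    · rw [Set.indicator_of_mem h]; exact ENNReal.ofReal_ne_top
    · rw [Set.indicator_of_notMem h]; exact ENNReal.zero_ne_top
  have hpt : ∀ (t : ℝ) (y : En n),
      (ball x (α * t)).indicator
        (fun y => ENNReal.ofReal (|a1Fun n t y| ^ 2 / t ^ (n + 1))) y ≤
      (Set.Icc (1/2:ℝ) 1).indicator (fun _ => ENNReal.ofReal (2^(n+1))) t *
        (ball (0 : En n) (1/2)).indicator (fun _ => 1) y := by
    intro t y
    by_cases hy : y ∈ ball x (α * t)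
    · rw [Set.indicator_of_mem hy]
      rcases a1_cases n t y with h | ⟨h, ht, ht1, hyb⟩
      · simp [h]
      · have hyb2 : y ∈ ball (0 : En n) (1/2) := by
          rw [mem_ball] at hyb ⊢; linarith [mem_ball.mp hyb]
        rw [Set.indicator_of_mem (Set.mem_Icc.mpr ⟨ht, ht1.le⟩),
          Set.indicator_of_mem hyb2, mul_one, h]
        apply ENNReal.ofReal_le_ofReal
        rw [abs_one, one_pow, div_le_iff₀ (by positivity), ← mul_pow]
        exact one_le_pow₀ (by linarith)
    · rw [Set.indicator_of_notMem hy]; exact zero_le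
  calc ∫⁻ t in Set.Ioi (0:ℝ), ∫⁻ y,
        (ball x (α * t)).indicator
          (fun y => ENNReal.ofReal (|a1Fun n t y| ^ 2 / t ^ (n + 1))) y
      ≤ ∫⁻ t in Set.Ioi (0:ℝ), ∫⁻ y,
          (Set.Icc (1/2:ℝ) 1).indicator (fun _ => ENNReal.ofReal (2^(n+1))) t *
            (ball (0 : En n) (1/2)).indicator (fun _ => 1) y :=
        lintegral_mono (fun t => lintegral_mono fun y => hpt t y)
    _ = ∫⁻ t in Set.Ioi (0:ℝ),
          (Set.Icc (1/2:ℝ) 1).indicator (fun _ => ENNReal.ofReal (2^(n+1))) t *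
            volume (ball (0 : En n) (1/2)) := by
        refine lintegral_congr fun t => ?_
        rw [lintegral_const_mul' _ _ (hne t), lintegral_indicator_const measurableSet_ball, one_mul]
    _ ≤ ∫⁻ t : ℝ,
          (Set.Icc (1/2:ℝ) 1).indicator (fun _ => ENNReal.ofReal (2^(n+1))) t *
            volume (ball (0 : En n) (1/2)) := setLIntegral_le_lintegral _ _
    _ = ENNReal.ofReal (2 ^ (n + 1)) * volume (ball (0 : En n) (1/2)) *
          ENNReal.ofReal (1/2) := by
        rw [lintegral_mul_const' _ _ measure_ball_lt_top.ne,
          lintegral_indicator measurableSet_Icc, setLIntegral_const, Real.volume_Icc]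
        norm_num
        ring

lemma conical_lower (n : ℕ) {α : ℝ} (hα : 1 ≤ α) {x : En n} (hx : ‖x‖ < α/4) :
    (volume (ball (0 : En n) (1/4)) * ENNReal.ofReal (1/4)) ^ (1/2 : ℝ) ≤
      conicalSq n α (a1Fun n) x := by
  rw [conicalSq]
  apply ENNReal.rpow_le_rpow _ (by norm_num : (0:ℝ) ≤ 1/2)
  have key : ∀ t ∈ Set.Ioc (1/2:ℝ) (3/4), volume (ball (0:En n) (1/4)) ≤
      ∫⁻ y, (ball x (α * t)).indicator
        (fun y => ENNReal.ofReal (|a1Fun n t y| ^ 2 / t ^ (n + 1))) y := by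
    intro t ht
    obtain ⟨ht1, ht2⟩ := ht
    have hv : volume (ball (0:En n) (1/4)) =
        ∫⁻ y, (ball (0:En n) (1/4)).indicator (fun _ => (1:ℝ≥0∞)) y := by
      rw [lintegral_indicator_const measurableSet_ball, one_mul]
    rw [hv]
    apply lintegral_mono
    intro y
    by_cases hy : y ∈ ball (0:En n) (1/4)
    · rw [Set.indicator_of_mem hy]
      have hd : dist y (0 : En n) < 1/4 := mem_ball.mp hy
      have hyx : y ∈ ball x (α * t) := by
        rw [mem_ball]
        have h1 : dist y x ≤ dist y (0 : En n) + dist (0 : En n) x := dist_triangle _ _ _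
        have h2 : dist (0 : En n) x < α/4 := by rw [dist_comm, dist_zero_right]; exact hx
        nlinarith [mul_lt_mul_of_pos_left ht1 (by linarith : (0:ℝ) < α)]
      rw [Set.indicator_of_mem hyx,
        a1_eq_one n ht1.le (by linarith) (mem_ball.mpr (by linarith))]
      rw [abs_one, one_pow]
      refine le_trans (le_of_eq ENNReal.ofReal_one.symm) (ENNReal.ofReal_le_ofReal ?_)
      rw [le_div_iff₀ (by positivity), one_mul]
      exact pow_le_one₀ (by linarith) (by linarith)
    · rw [Set.indicator_of_notMem hy]; exact zero_le
  calc volume (ball (0:En n) (1/4)) * ENNReal.ofReal (1/4)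
      = ∫⁻ _ in Set.Ioc (1/2:ℝ) (3/4), volume (ball (0:En n) (1/4)) := by
        rw [setLIntegral_const, Real.volume_Ioc]; norm_num
    _ ≤ ∫⁻ t in Set.Ioc (1/2:ℝ) (3/4), ∫⁻ y,
          (ball x (α * t)).indicator
            (fun y => ENNReal.ofReal (|a1Fun n t y| ^ 2 / t ^ (n + 1))) y :=
        lintegral_mono_ae ((ae_restrict_mem measurableSet_Ioc).mono key)
    _ ≤ ∫⁻ t in Set.Ioi (0:ℝ), ∫⁻ y,
          (ball x (α * t)).indicator
            (fun y => ENNReal.ofReal (|a1Fun n t y| ^ 2 / t ^ (n + 1))) y :=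
        lintegral_mono_set (fun t ht => lt_trans (by norm_num) ht.1)

/-- For `a₁` as above, `‖a₁‖_{T^{p,2}_1} ∼ 1` and
`‖a₁‖_{T^{p,2}_α} ∼ α^{n/p}` for `α ≥ 1`, with comparability constants depending
only on `n` and `p`. -/
theorem statement15 (n : ℕ) (hn : 1 ≤ n) (p : ℝ) (hp : 0 < p) :
    ∃ c C : ℝ, 0 < c ∧ c ≤ C ∧
      (ENNReal.ofReal c ≤ tentNorm n p 1 (a1Fun n) ∧
        tentNorm n p 1 (a1Fun n) ≤ ENNReal.ofReal C) ∧
      ∀ α : ℝ, 1 ≤ α →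
        ENNReal.ofReal (c * α ^ ((n : ℝ) / p)) ≤ tentNorm n p α (a1Fun n) ∧
        tentNorm n p α (a1Fun n) ≤ ENNReal.ofReal (C * α ^ ((n : ℝ) / p)) := by
  haveI : Nontrivial (En n) := Module.nontrivial_of_finrank_pos (R := ℝ)
    (by rw [finrank_euclideanSpace_fin]; omega)
  set V : ℝ≥0∞ := volume (ball (0 : En n) 1) with hVdef
  have hVpos : 0 < V := measure_ball_pos _ _ one_pos
  have hVne : V ≠ ⊤ := measure_ball_lt_top.ne
  have hball : ∀ r : ℝ, 0 ≤ r →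
      volume (ball (0 : En n) r) = ENNReal.ofReal (r ^ n) * V := by
    intro r hr; rw [Measure.addHaar_ball _ _ hr, finrank_euclideanSpace_fin]
  set K : ℝ≥0∞ := ENNReal.ofReal (2 ^ (n + 1)) * volume (ball (0 : En n) (1/2)) *
    ENNReal.ofReal (1/2) with hKdef
  set L : ℝ≥0∞ := volume (ball (0 : En n) (1/4)) * ENNReal.ofReal (1/4) with hLdef
  have hKne : K ≠ ⊤ :=
    ENNReal.mul_ne_top (ENNReal.mul_ne_top ENNReal.ofReal_ne_top measure_ball_lt_top.ne)
      ENNReal.ofReal_ne_top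
  have hLne : L ≠ ⊤ := ENNReal.mul_ne_top measure_ball_lt_top.ne ENNReal.ofReal_ne_top
  have hLpos : 0 < L := ENNReal.mul_pos (measure_ball_pos _ _ (by norm_num)).ne'
    (ENNReal.ofReal_pos.mpr (by norm_num)).ne'
  have hppos : (0:ℝ) ≤ 1/p := by positivity
  -- integral bounds
  have hIineq : ∀ α : ℝ, 1 ≤ α →
      (L ^ (1/2 : ℝ)) ^ p * volume (ball (0 : En n) (α/4)) ≤
        (∫⁻ x, conicalSq n α (a1Fun n) x ^ p) ∧
      (∫⁻ x, conicalSq n α (a1Fun n) x ^ p) ≤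
        (K ^ (1/2 : ℝ)) ^ p * volume (ball (0 : En n) α) := by
    intro α hα
    constructor
    · calc (L ^ (1/2:ℝ))^p * volume (ball (0:En n) (α/4))
          = ∫⁻ _ in ball (0:En n) (α/4), (L ^ (1/2:ℝ))^p := (setLIntegral_const _ _).symm
        _ ≤ ∫⁻ x in ball (0:En n) (α/4), conicalSq n α (a1Fun n) x ^ p := by
            refine lintegral_mono_ae ((ae_restrict_mem measurableSet_ball).mono fun x hx => ?_)
            refine ENNReal.rpow_le_rpow (conical_lower n hα ?_) hp.le
            rw [← dist_zero_right]; exact mem_ball.mp hx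
        _ ≤ ∫⁻ x, conicalSq n α (a1Fun n) x ^ p := setLIntegral_le_lintegral _ _
    · calc (∫⁻ x, conicalSq n α (a1Fun n) x ^ p)
          ≤ ∫⁻ x, (ball (0:En n) α).indicator (fun _ => (K ^ (1/2:ℝ))^p) x := by
            refine lintegral_mono fun x => ?_
            by_cases hx : x ∈ ball (0:En n) α
            · rw [Set.indicator_of_mem hx]
              exact ENNReal.rpow_le_rpow (conical_upper n x) hp.le
            · have h0 : conicalSq n α (a1Fun n) x = 0 := by
                refine conical_zero n hα ?_
                rw [mem_ball, dist_zero_right] at hx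
                exact not_lt.mp hx
              rw [Set.indicator_of_notMem hx, h0, ENNReal.zero_rpow_of_pos hp]
        _ = (K ^ (1/2:ℝ))^p * volume (ball (0:En n) α) :=
            lintegral_indicator_const measurableSet_ball _
  -- tent norm bounds
  have hTN : ∀ α : ℝ, 1 ≤ α →
      L ^ (1/2:ℝ) * (volume (ball (0:En n) (α/4))) ^ (1/p : ℝ) ≤ tentNorm n p α (a1Fun n) ∧
      tentNorm n p α (a1Fun n) ≤ K ^ (1/2:ℝ) * (volume (ball (0:En n) α)) ^ (1/p : ℝ) := by
    intro α hα
    obtain ⟨h1, h2⟩ := hIineq α hα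
    have key : ∀ Z W : ℝ≥0∞, ((Z ^ (1/2:ℝ))^p * W) ^ (1/p : ℝ) =
        Z ^ (1/2:ℝ) * W ^ (1/p : ℝ) := by
      intro Z W
      rw [ENNReal.mul_rpow_of_nonneg _ _ hppos, ← ENNReal.rpow_mul,
        mul_one_div_cancel hp.ne', ENNReal.rpow_one]
    constructor
    · rw [tentNorm, ← key]
      exact ENNReal.rpow_le_rpow h1 hppos
    · rw [tentNorm, ← key]
      exact ENNReal.rpow_le_rpow h2 hppos
  have hvol : ∀ r : ℝ, 0 ≤ r → (volume (ball (0:En n) r)) ^ (1/p : ℝ) =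
      ENNReal.ofReal (r ^ ((n:ℝ)/p)) * V ^ (1/p : ℝ) := by
    intro r hr
    rw [hball r hr, ENNReal.mul_rpow_of_nonneg _ _ hppos,
      ENNReal.ofReal_rpow_of_nonneg (by positivity) hppos]
    congr 2
    rw [← Real.rpow_natCast r n, ← Real.rpow_mul hr, mul_one_div]
  set cE : ℝ≥0∞ := L ^ (1/2:ℝ) * (ENNReal.ofReal ((4:ℝ) ^ (-((n:ℝ)/p))) * V ^ (1/p:ℝ))
    with hcEdef
  set CE : ℝ≥0∞ := K ^ (1/2:ℝ) * V ^ (1/p:ℝ) with hCEdef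
  have hMain : ∀ α : ℝ, 1 ≤ α →
      cE * ENNReal.ofReal (α ^ ((n:ℝ)/p)) ≤ tentNorm n p α (a1Fun n) ∧
      tentNorm n p α (a1Fun n) ≤ CE * ENNReal.ofReal (α ^ ((n:ℝ)/p)) := by
    intro α hα
    have hα0 : (0:ℝ) ≤ α := by linarith
    obtain ⟨h1, h2⟩ := hTN α hα
    constructor
    · refine le_trans (le_of_eq ?_) h1
      rw [hvol (α/4) (by linarith)]
      have h4 : ((α/4):ℝ) ^ ((n:ℝ)/p) = α ^ ((n:ℝ)/p) * (4:ℝ) ^ (-((n:ℝ)/p)) := by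
        rw [Real.div_rpow hα0 (by norm_num), Real.rpow_neg (by norm_num), div_eq_mul_inv]
      rw [h4, ENNReal.ofReal_mul (by positivity), hcEdef]
      ring
    · refine le_trans h2 (le_of_eq ?_)
      rw [hvol α hα0, hCEdef]
      ring
  have h1 := hMain 1 le_rfl
  simp only [Real.one_rpow, ENNReal.ofReal_one, mul_one] at h1
  have hle : cE ≤ CE := h1.1.trans h1.2
  have hCEne : CE ≠ ⊤ := ENNReal.mul_ne_top
    (ENNReal.rpow_ne_top_of_nonneg (by norm_num) hKne)
    (ENNReal.rpow_ne_top_of_nonneg hppos hVne)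
  have hcEne : cE ≠ ⊤ := ne_top_of_le_ne_top hCEne hle
  have hcEpos : 0 < cE := by
    refine ENNReal.mul_pos (ENNReal.rpow_pos hLpos hLne).ne' ?_
    exact (ENNReal.mul_pos (ENNReal.ofReal_pos.mpr (Real.rpow_pos_of_pos (by norm_num) _)).ne'
      (ENNReal.rpow_pos hVpos hVne).ne').ne'
  refine ⟨cE.toReal, CE.toReal, ENNReal.toReal_pos hcEpos.ne' hcEne,
    ENNReal.toReal_mono hCEne hle, ⟨?_, ?_⟩, ?_⟩
  · rw [ENNReal.ofReal_toReal hcEne]; exact h1.1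
  · rw [ENNReal.ofReal_toReal hCEne]; exact h1.2
  · intro α hα
    have h := hMain α hα
    constructor
    · rw [ENNReal.ofReal_mul ENNReal.toReal_nonneg, ENNReal.ofReal_toReal hcEne]; exact h.1
    · rw [ENNReal.ofReal_mul ENNReal.toReal_nonneg, ENNReal.ofReal_toReal hCEne]; exact h.2

end
end

section
/- Let n ≥ 1, let B = B(0,1) be the open unit ball of ℝⁿ, let α ≥ 2, and let a₂(t,y) = 1_{T_1 B}(αt,y) · 1_{[1/2,1]}(αt). Then for every 0 < p < ∞ there exist constants 0 < c ≤ C < ∞ depending only on n and p (not on α) such that c α^{n/2} ≤ ‖a₂‖_{T^{p,2}_α} ≤ C α^{n/2} and c ≤ ‖a₂‖_{T^{p,2}_1} ≤ C. -/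
open MeasureTheory Metric Set Filter ENNReal

noncomputable section

open scoped Classical

lemma a1_eq (n : ℕ) (s : ℝ) (y : En n) :
    a1Fun n s y = if 1/2 ≤ s ∧ s < 1 ∧ y ∈ ball (0 : En n) (1 - s) then 1 else 0 := by
  classical
  unfold a1Fun tent
  by_cases h : 1/2 ≤ s ∧ s < 1 ∧ y ∈ ball (0 : En n) (1 - s)
  · obtain ⟨h1, h2, h3⟩ := h
    rw [if_pos ⟨h1, h2, h3⟩, Set.indicator_of_mem, Set.indicator_of_mem, one_mul]
    · exact ⟨h1, h2.le⟩
    · refine ⟨by linarith, by simpa using h2, by simpa using h3⟩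
  · rw [if_neg h]
    push_neg at h
    by_cases h1 : 1/2 ≤ s
    · by_cases h2 : s < 1
      · rw [Set.indicator_of_notMem, zero_mul]
        intro hm
        exact (h h1 h2) (by simpa using hm.2.2)
      · rw [Set.indicator_of_notMem, zero_mul]
        intro hm
        exact h2 (by simpa using hm.2.1)
    · rw [Set.indicator_of_notMem (s := Set.Icc (1/2:ℝ) 1) (fun hm => h1 hm.1), mul_zero]

lemma sq_ofReal (n : ℕ) (s : ℝ) (c : ℝ) (y : En n) :
    ENNReal.ofReal (|a1Fun n s y| ^ 2 / c) =
      if 1/2 ≤ s ∧ s < 1 ∧ y ∈ ball (0 : En n) (1 - s) then ENNReal.ofReal (1 / c) else 0 := by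
  rw [a1_eq]
  split_ifs with h
  · norm_num
  · norm_num

lemma inner_int (n : ℕ) (α β t : ℝ) (x : En n) :
    ∫⁻ y, (ball x (β * t)).indicator
        (fun y => ENNReal.ofReal (|a1Fun n (α * t) y| ^ 2 / t ^ (n + 1))) y =
      if 1/2 ≤ α * t ∧ α * t < 1 then
        ENNReal.ofReal (1 / t ^ (n + 1)) * volume (ball x (β * t) ∩ ball (0 : En n) (1 - α * t))
      else 0 := by
  by_cases h : 1/2 ≤ α * t ∧ α * t < 1
  · rw [if_pos h]
    have key : ∀ y, (ball x (β * t)).indicator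
        (fun y => ENNReal.ofReal (|a1Fun n (α * t) y| ^ 2 / t ^ (n + 1))) y =
        (ball x (β * t) ∩ ball (0 : En n) (1 - α * t)).indicator
          (fun _ => ENNReal.ofReal (1 / t ^ (n + 1))) y := by
      intro y
      rw [Set.indicator_apply, Set.indicator_apply, sq_ofReal]
      by_cases hy : y ∈ ball x (β * t)
      · by_cases hy2 : y ∈ ball (0 : En n) (1 - α * t)
        · rw [if_pos hy, if_pos ⟨h.1, h.2, hy2⟩, if_pos ⟨hy, hy2⟩]
        · rw [if_pos hy, if_neg (fun hc => hy2 hc.2.2), if_neg (fun hm => hy2 hm.2)]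
      · rw [if_neg hy, if_neg (fun hm => hy hm.1)]
    simp_rw [key]
    rw [lintegral_indicator (measurableSet_ball.inter measurableSet_ball),
      setLIntegral_const, mul_comm]
  · rw [if_neg h]
    have key : ∀ y, (ball x (β * t)).indicator
        (fun y => ENNReal.ofReal (|a1Fun n (α * t) y| ^ 2 / t ^ (n + 1))) y = 0 := by
      intro y
      rw [Set.indicator_apply, sq_ofReal]
      have hc : ¬(1/2 ≤ α * t ∧ α * t < 1 ∧ y ∈ ball (0 : En n) (1 - α * t)) :=
        fun hc => h ⟨hc.1, hc.2.1⟩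
      rw [if_neg hc]
      simp
    simp_rw [key]
    simp

def Ifun (n : ℕ) (α β : ℝ) (x : En n) : ℝ≥0∞ :=
  ∫⁻ t in Set.Ioi (0:ℝ), if 1/2 ≤ α * t ∧ α * t < 1 then
    ENNReal.ofReal (1 / t ^ (n + 1)) * volume (ball x (β * t) ∩ ball (0 : En n) (1 - α * t))
  else 0

lemma conical_eq (n : ℕ) (α β : ℝ) (x : En n) :
    conicalSq n β (fun t y => a1Fun n (α * t) y) x = Ifun n α β x ^ (1 / 2 : ℝ) := by
  unfold conicalSq Ifun
  congr 1
  exact lintegral_congr fun t => inner_int n α β t x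

lemma ball_vol (n : ℕ) (hn : 1 ≤ n) (x : En n) {r : ℝ} (hr : 0 ≤ r) :
    volume (ball x r) = ENNReal.ofReal (r ^ n) * volume (ball (0 : En n) 1) := by
  haveI : Nonempty (Fin n) := ⟨⟨0, hn⟩⟩
  haveI : Nontrivial (En n) := inferInstance
  rw [Measure.addHaar_ball volume x hr, finrank_euclideanSpace_fin]

lemma I_le (n : ℕ) (hn : 1 ≤ n) (α β : ℝ) (hα : 2 ≤ α) (hβ : 0 < β) (x : En n) :
    Ifun n α β x ≤ ENNReal.ofReal (β ^ n) * volume (ball (0 : En n) 1) := by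
  have hα0 : (0:ℝ) < α := by linarith
  set v := volume (ball (0 : En n) 1) with hv
  have step : ∀ t : ℝ, (if 1/2 ≤ α * t ∧ α * t < 1 then
      ENNReal.ofReal (1 / t ^ (n + 1)) * volume (ball x (β * t) ∩ ball (0 : En n) (1 - α * t))
    else 0) ≤ (Set.Ico (1/(2*α)) (1/α)).indicator
      (fun _ => ENNReal.ofReal (2 * α * β ^ n) * v) t := by
    intro t
    by_cases h : 1/2 ≤ α * t ∧ α * t < 1
    · have ht0 : 0 < t := by nlinarith [h.1]
      have htJ : t ∈ Set.Ico (1/(2*α)) (1/α) := by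
        constructor
        · rw [div_le_iff₀ (by linarith : (0:ℝ) < 2*α)]; nlinarith [h.1]
        · rw [lt_div_iff₀ hα0]; nlinarith [h.2]
      have h1t : 1 / t ≤ 2 * α := by
        rw [div_le_iff₀ ht0]
        have := (div_le_iff₀ (show (0:ℝ) < 2*α by linarith)).mp htJ.1
        linarith
      rw [if_pos h, Set.indicator_of_mem htJ]
      calc ENNReal.ofReal (1 / t ^ (n + 1)) * volume (ball x (β * t) ∩ ball (0 : En n) (1 - α * t))
          ≤ ENNReal.ofReal (1 / t ^ (n + 1)) * volume (ball x (β * t)) := by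
            gcongr; exact inter_subset_left
        _ = ENNReal.ofReal (1 / t ^ (n + 1)) * (ENNReal.ofReal ((β * t) ^ n) * v) := by
            rw [ball_vol n hn x (by positivity)]
        _ = ENNReal.ofReal ((β * t) ^ n / t ^ (n + 1)) * v := by
            rw [← mul_assoc, ← ENNReal.ofReal_mul (by positivity)]
            ring_nf
        _ ≤ ENNReal.ofReal (2 * α * β ^ n) * v := by
            apply mul_le_mul_left
            apply ENNReal.ofReal_le_ofReal
            have heq : (β * t) ^ n / t ^ (n + 1) = β ^ n * (1 / t) := by
              field_simp [ht0.ne']; ring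
            rw [heq]
            calc β ^ n * (1 / t) ≤ β ^ n * (2 * α) :=
                  mul_le_mul_of_nonneg_left h1t (by positivity)
              _ = 2 * α * β ^ n := by ring
    · rw [if_neg h]; exact zero_le
  calc Ifun n α β x ≤ ∫⁻ t in Set.Ioi (0:ℝ), (Set.Ico (1/(2*α)) (1/α)).indicator
        (fun _ => ENNReal.ofReal (2 * α * β ^ n) * v) t := lintegral_mono step
    _ ≤ ∫⁻ t, (Set.Ico (1/(2*α)) (1/α)).indicator
        (fun _ => ENNReal.ofReal (2 * α * β ^ n) * v) t := setLIntegral_le_lintegral _ _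
    _ = (ENNReal.ofReal (2 * α * β ^ n) * v) * volume (Set.Ico (1/(2*α)) (1/α)) :=
        lintegral_indicator_const measurableSet_Ico _
    _ = ENNReal.ofReal (β ^ n) * v := by
        rw [Real.volume_Ico]
        have h1 : 1/α - 1/(2*α) = 1/(2*α) := by field_simp; ring
        rw [h1, mul_comm (ENNReal.ofReal (2 * α * β ^ n)) v, mul_assoc,
          ← ENNReal.ofReal_mul (by positivity)]
        have h2 : 2 * α * β ^ n * (1/(2*α)) = β ^ n := by field_simp
        rw [h2, mul_comm]

lemma I_zero (n : ℕ) (α β : ℝ) (hα : 2 ≤ α) (hβ : 0 < β) (hβα : β ≤ α) (x : En n)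
    (hx : 1 ≤ ‖x‖) : Ifun n α β x = 0 := by
  have hα0 : (0:ℝ) < α := by linarith
  have step : ∀ t : ℝ, (if 1/2 ≤ α * t ∧ α * t < 1 then
      ENNReal.ofReal (1 / t ^ (n + 1)) * volume (ball x (β * t) ∩ ball (0 : En n) (1 - α * t))
    else 0) = 0 := by
    intro t
    by_cases h : 1/2 ≤ α * t ∧ α * t < 1
    · have ht0 : 0 < t := by nlinarith [h.1]
      rw [if_pos h]
      have hempty : ball x (β * t) ∩ ball (0 : En n) (1 - α * t) = ∅ := by
        ext y
        simp only [Set.mem_inter_iff, mem_ball, Set.mem_empty_iff_false, iff_false, not_and]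
        intro hy1 hy2
        have h1 : ‖x‖ ≤ dist y x + dist y 0 := by
          rw [dist_eq_norm, dist_eq_norm, sub_zero]
          calc ‖x‖ = ‖(x - y) + y‖ := by congr 1; abel
            _ ≤ ‖x - y‖ + ‖y‖ := norm_add_le _ _
            _ = ‖y - x‖ + ‖y‖ := by rw [norm_sub_rev]
        have hb : β * t ≤ α * t := by nlinarith
        linarith
      rw [hempty]
      simp
    · rw [if_neg h]
  unfold Ifun
  simp_rw [step]
  simp

lemma I_ge (n : ℕ) (hn : 1 ≤ n) (α β ρ : ℝ) (hα : 2 ≤ α) (hβ : 0 < β) (hρ : 0 < ρ) (hρ1 : ρ ≤ 3/8)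
    (hρ2 : ρ ≤ β / (2 * α)) (x : En n) (hx : ‖x‖ < 1/16) :
    ENNReal.ofReal (α ^ n * ρ ^ n / 16) * volume (ball (0 : En n) 1) ≤ Ifun n α β x := by
  have hα0 : (0:ℝ) < α := by linarith
  set v := volume (ball (0 : En n) 1) with hv
  set s := Set.Ico (1/(2*α)) (9/(16*α)) with hs
  have step : ∀ t ∈ s,
      ENNReal.ofReal (α ^ (n+1) * ρ ^ n) * v ≤ (if 1/2 ≤ α * t ∧ α * t < 1 then
        ENNReal.ofReal (1 / t ^ (n + 1)) * volume (ball x (β * t) ∩ ball (0 : En n) (1 - α * t))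
      else 0) := by
    intro t ht
    obtain ⟨ht1, ht2⟩ := ht
    have ht0 : (0:ℝ) < t := lt_of_lt_of_le (by positivity) ht1
    have hat1 : 1/2 ≤ α * t := by
      have := (div_le_iff₀ (show (0:ℝ) < 2*α by linarith)).mp ht1
      linarith
    have hat2 : α * t < 9/16 := by
      have := (lt_div_iff₀ (show (0:ℝ) < 16*α by linarith)).mp ht2
      linarith
    rw [if_pos ⟨hat1, by linarith⟩]
    have hsub : ball x ρ ⊆ ball x (β * t) ∩ ball (0 : En n) (1 - α * t) := by
      intro y hy
      rw [mem_ball] at hy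
      constructor
      · rw [mem_ball]
        have hρβt : ρ ≤ β * t := by
          calc ρ ≤ β / (2 * α) := hρ2
            _ ≤ β * t := by
              rw [div_le_iff₀ (show (0:ℝ) < 2*α by linarith)]
              nlinarith
        linarith
      · rw [mem_ball]
        have : dist y 0 ≤ dist y x + ‖x‖ := by
          rw [dist_eq_norm, dist_eq_norm, sub_zero]
          calc ‖y‖ = ‖(y - x) + x‖ := by congr 1; abel
            _ ≤ ‖y - x‖ + ‖x‖ := norm_add_le _ _
        linarith
      -- hum second goal: dist y 0 < 1 - α*t : have dist y 0 < ρ + 1/16 ≤ 3/8+1/16 = 7/16 ≤ 1 - 9/16 < 1 - αt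
    have hvol : ENNReal.ofReal (ρ ^ n) * v ≤
        volume (ball x (β * t) ∩ ball (0 : En n) (1 - α * t)) := by
      rw [← ball_vol n hn x hρ.le]
      exact measure_mono hsub
    have hpow : ENNReal.ofReal (α ^ (n+1)) ≤ ENNReal.ofReal (1 / t ^ (n+1)) := by
      apply ENNReal.ofReal_le_ofReal
      rw [le_div_iff₀ (by positivity)]
      have htle : t ≤ 1/α := by
        apply le_trans ht2.le
        rw [div_le_div_iff₀ (by linarith) hα0]
        linarith
      calc α ^ (n+1) * t ^ (n+1) = (α * t) ^ (n+1) := by rw [mul_pow]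
        _ ≤ 1 := by
          apply pow_le_one₀ (by positivity)
          calc α * t ≤ α * (1/α) := by nlinarith
            _ = 1 := by field_simp
    calc ENNReal.ofReal (α ^ (n+1) * ρ ^ n) * v
        = ENNReal.ofReal (α ^ (n+1)) * (ENNReal.ofReal (ρ ^ n) * v) := by
          rw [← mul_assoc, ← ENNReal.ofReal_mul (by positivity)]
      _ ≤ ENNReal.ofReal (1 / t ^ (n+1)) *
          volume (ball x (β * t) ∩ ball (0 : En n) (1 - α * t)) := by
          exact mul_le_mul' hpow hvol
  have hsub2 : s ⊆ Set.Ioi (0:ℝ) := by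
    intro t ht
    exact lt_of_lt_of_le (by positivity) ht.1
  calc ENNReal.ofReal (α ^ n * ρ ^ n / 16) * v
      = (ENNReal.ofReal (α ^ (n+1) * ρ ^ n) * v) * volume s := by
        rw [hs, Real.volume_Ico]
        have h1 : 9/(16*α) - 1/(2*α) = 1/(16*α) := by field_simp; ring
        rw [h1, mul_comm (ENNReal.ofReal (α ^ (n+1) * ρ ^ n)) v, mul_assoc,
          ← ENNReal.ofReal_mul (by positivity)]
        have h2 : α ^ (n+1) * ρ ^ n * (1/(16*α)) = α ^ n * ρ ^ n / 16 := by
          rw [pow_succ]; field_simp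
        rw [h2, mul_comm]
    _ = ∫⁻ _ in s, ENNReal.ofReal (α ^ (n+1) * ρ ^ n) * v := (setLIntegral_const _ _).symm
    _ ≤ ∫⁻ t in s, (if 1/2 ≤ α * t ∧ α * t < 1 then
          ENNReal.ofReal (1 / t ^ (n + 1)) * volume (ball x (β * t) ∩ ball (0 : En n) (1 - α * t))
        else 0) := setLIntegral_mono' measurableSet_Ico step
    _ ≤ Ifun n α β x := lintegral_mono_set hsub2

lemma tent_upper (n : ℕ) (hn : 1 ≤ n) (p : ℝ) (hp : 0 < p) (α β : ℝ) (hα : 2 ≤ α)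
    (hβ : 0 < β) (hβα : β ≤ α) :
    tentNorm n p β (fun t y => a1Fun n (α * t) y) ≤
      (ENNReal.ofReal (β ^ n) * volume (ball (0 : En n) 1)) ^ (1/2 : ℝ) *
        volume (ball (0 : En n) 1) ^ (1/p) := by
  set v := volume (ball (0 : En n) 1) with hv
  set M := (ENNReal.ofReal (β ^ n) * v) ^ (1/2 : ℝ) with hM
  have step : ∀ x : En n, conicalSq n β (fun t y => a1Fun n (α * t) y) x ^ p ≤
      (ball (0 : En n) 1).indicator (fun _ => M ^ p) x := by
    intro x
    by_cases hx : x ∈ ball (0 : En n) 1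
    · rw [Set.indicator_of_mem hx]
      apply ENNReal.rpow_le_rpow _ hp.le
      rw [conical_eq]
      exact ENNReal.rpow_le_rpow (I_le n hn α β hα hβ x) (by norm_num)
    · rw [Set.indicator_of_notMem hx, conical_eq,
        I_zero n α β hα hβ hβα x (not_lt.mp (fun hc => hx (mem_ball_zero_iff.mpr hc))),
        ENNReal.zero_rpow_of_pos (by norm_num), ENNReal.zero_rpow_of_pos hp]
  have h1 : (∫⁻ x, conicalSq n β (fun t y => a1Fun n (α * t) y) x ^ p) ≤ M ^ p * v := by
    calc (∫⁻ x, conicalSq n β (fun t y => a1Fun n (α * t) y) x ^ p)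
        ≤ ∫⁻ x, (ball (0 : En n) 1).indicator (fun _ => M ^ p) x := lintegral_mono step
      _ = M ^ p * v := lintegral_indicator_const measurableSet_ball _
  calc tentNorm n p β (fun t y => a1Fun n (α * t) y)
      ≤ (M ^ p * v) ^ (1/p) := ENNReal.rpow_le_rpow h1 (by positivity)
    _ = M * v ^ (1/p) := by
        rw [ENNReal.mul_rpow_of_nonneg _ _ (by positivity), ← ENNReal.rpow_mul,
          mul_one_div_cancel hp.ne', ENNReal.rpow_one]

lemma tent_lower (n : ℕ) (hn : 1 ≤ n) (p : ℝ) (hp : 0 < p) (α β ρ : ℝ) (hα : 2 ≤ α)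
    (hβ : 0 < β) (hρ : 0 < ρ) (hρ1 : ρ ≤ 3/8) (hρ2 : ρ ≤ β / (2 * α)) :
    (ENNReal.ofReal (α ^ n * ρ ^ n / 16) * volume (ball (0 : En n) 1)) ^ (1/2 : ℝ) *
        volume (ball (0 : En n) (1/16)) ^ (1/p) ≤
      tentNorm n p β (fun t y => a1Fun n (α * t) y) := by
  set v := volume (ball (0 : En n) 1) with hv
  set w := volume (ball (0 : En n) (1/16)) with hw
  set m := (ENNReal.ofReal (α ^ n * ρ ^ n / 16) * v) ^ (1/2 : ℝ) with hm
  have step : ∀ x ∈ ball (0 : En n) (1/16),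
      m ^ p ≤ conicalSq n β (fun t y => a1Fun n (α * t) y) x ^ p := by
    intro x hx
    apply ENNReal.rpow_le_rpow _ hp.le
    rw [conical_eq]
    exact ENNReal.rpow_le_rpow
      (I_ge n hn α β ρ hα hβ hρ hρ1 hρ2 x (mem_ball_zero_iff.mp hx)) (by norm_num)
  have h1 : m ^ p * w ≤ ∫⁻ x, conicalSq n β (fun t y => a1Fun n (α * t) y) x ^ p := by
    calc m ^ p * w = ∫⁻ _ in ball (0 : En n) (1/16), m ^ p := (setLIntegral_const _ _).symm
      _ ≤ ∫⁻ x in ball (0 : En n) (1/16),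
            conicalSq n β (fun t y => a1Fun n (α * t) y) x ^ p :=
          setLIntegral_mono' measurableSet_ball step
      _ ≤ ∫⁻ x, conicalSq n β (fun t y => a1Fun n (α * t) y) x ^ p :=
          setLIntegral_le_lintegral _ _
  calc m * w ^ (1/p) = (m ^ p * w) ^ (1/p) := by
        rw [ENNReal.mul_rpow_of_nonneg _ _ (by positivity), ← ENNReal.rpow_mul,
          mul_one_div_cancel hp.ne', ENNReal.rpow_one]
    _ ≤ tentNorm n p β (fun t y => a1Fun n (α * t) y) :=
        ENNReal.rpow_le_rpow h1 (by positivity)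

/-- For `a₂(t,y) = a₁(αt, y)`, one has `‖a₂‖_{T^{p,2}_α} ∼ α^{n/2}` and
`‖a₂‖_{T^{p,2}_1} ∼ 1` for `α ≥ 2`, with comparability constants depending only on `n, p`. -/
theorem statement16 (n : ℕ) (hn : 1 ≤ n) (p : ℝ) (hp : 0 < p) :
    ∃ c C : ℝ, 0 < c ∧ c ≤ C ∧
      ∀ α : ℝ, 2 ≤ α →
        (ENNReal.ofReal (c * α ^ ((n : ℝ) / 2)) ≤
            tentNorm n p α (fun t y => a1Fun n (α * t) y) ∧
          tentNorm n p α (fun t y => a1Fun n (α * t) y) ≤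
            ENNReal.ofReal (C * α ^ ((n : ℝ) / 2))) ∧
        (ENNReal.ofReal c ≤ tentNorm n p 1 (fun t y => a1Fun n (α * t) y) ∧
          tentNorm n p 1 (fun t y => a1Fun n (α * t) y) ≤ ENNReal.ofReal C) := by
  set v := volume (ball (0 : En n) 1) with hv
  set w := volume (ball (0 : En n) (1/16 : ℝ)) with hw
  have hvfin : v ≠ ⊤ := measure_ball_lt_top.ne
  have hwfin : w ≠ ⊤ := measure_ball_lt_top.ne
  have hv0 : v ≠ 0 := (measure_ball_pos _ _ one_pos).ne'
  have hw0 : w ≠ 0 := (measure_ball_pos _ _ (by norm_num)).ne'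
  set V := v.toReal with hVdef
  set W := w.toReal with hWdef
  have hV : 0 < V := ENNReal.toReal_pos hv0 hvfin
  have hW : 0 < W := ENNReal.toReal_pos hw0 hwfin
  have hvV : v = ENNReal.ofReal V := (ENNReal.ofReal_toReal hvfin).symm
  have hwW : w = ENNReal.ofReal W := (ENNReal.ofReal_toReal hwfin).symm
  set C0 := V ^ ((1:ℝ)/2) * V ^ (1/p) with hC0
  set c1 := ((3/8:ℝ)^n * V / 16) ^ ((1:ℝ)/2) * W ^ (1/p) with hc1
  set c2 := ((1/2:ℝ)^n * V / 16) ^ ((1:ℝ)/2) * W ^ (1/p) with hc2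
  have hc1p : 0 < c1 := by positivity
  have hc2p : 0 < c2 := by positivity
  have hC0p : 0 < C0 := by positivity
  refine ⟨min c1 c2, max C0 (max c1 c2), lt_min hc1p hc2p,
    (min_le_left _ _).trans ((le_max_left c1 c2).trans (le_max_right _ _)), ?_⟩
  intro α hα
  have hα0 : (0:ℝ) < α := by linarith
  have conv : ∀ a : ℝ, 0 ≤ a → ∀ (u : ℝ≥0∞) (U : ℝ), u = ENNReal.ofReal U → 0 ≤ U →
      (ENNReal.ofReal a * v) ^ (1/2 : ℝ) * u ^ (1/p) =
        ENNReal.ofReal ((a * V) ^ ((1:ℝ)/2) * U ^ (1/p)) := by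
    intro a ha u U huU hU
    rw [hvV, huU, ← ENNReal.ofReal_mul ha,
      ENNReal.ofReal_rpow_of_nonneg (by positivity) (by norm_num : (0:ℝ) ≤ 1/2),
      ENNReal.ofReal_rpow_of_nonneg hU (by positivity),
      ← ENNReal.ofReal_mul (by positivity)]
  constructor
  · constructor
    · -- lower bound, aperture α
      have hρ2 : (3/8 : ℝ) ≤ α / (2 * α) := by
        rw [show α / (2*α) = 1/2 by field_simp]; norm_num
      have := tent_lower n hn p hp α α (3/8) hα hα0 (by norm_num) le_rfl hρ2
      rw [← hv, ← hw] at this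
      refine le_trans ?_ this
      rw [conv _ (by positivity) w W hwW hW.le]
      apply ENNReal.ofReal_le_ofReal
      have key : (α ^ n * (3/8:ℝ) ^ n / 16 * V) ^ ((1:ℝ)/2) =
          α ^ ((n:ℝ)/2) * ((3/8:ℝ)^n * V / 16) ^ ((1:ℝ)/2) := by
        rw [show α ^ n * (3/8:ℝ) ^ n / 16 * V = α ^ n * ((3/8:ℝ)^n * V / 16) by ring,
          Real.mul_rpow (by positivity) (by positivity),
          ← Real.rpow_natCast α n, ← Real.rpow_mul hα0.le, mul_one_div]
      rw [key]
      calc min c1 c2 * α ^ ((n:ℝ)/2) ≤ c1 * α ^ ((n:ℝ)/2) :=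
            mul_le_mul_of_nonneg_right (min_le_left _ _) (by positivity)
        _ = α ^ ((n:ℝ)/2) * (((3/8:ℝ)^n * V / 16) ^ ((1:ℝ)/2) * W ^ (1/p)) := by
            rw [hc1]; ring
        _ = α ^ ((n:ℝ)/2) * ((3/8:ℝ)^n * V / 16) ^ ((1:ℝ)/2) * W ^ (1/p) := by ring
    · -- upper bound, aperture α
      have := tent_upper n hn p hp α α hα hα0 le_rfl
      rw [← hv] at this
      refine le_trans this ?_
      rw [conv _ (by positivity) v V hvV hV.le]
      apply ENNReal.ofReal_le_ofReal
      have key : (α ^ n * V) ^ ((1:ℝ)/2) = α ^ ((n:ℝ)/2) * V ^ ((1:ℝ)/2) := by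
        rw [Real.mul_rpow (by positivity) hV.le, ← Real.rpow_natCast α n,
          ← Real.rpow_mul hα0.le, mul_one_div]
      rw [key]
      calc α ^ ((n:ℝ)/2) * V ^ ((1:ℝ)/2) * V ^ (1/p) = C0 * α ^ ((n:ℝ)/2) := by
            rw [hC0]; ring
        _ ≤ max C0 (max c1 c2) * α ^ ((n:ℝ)/2) :=
            mul_le_mul_of_nonneg_right (le_max_left _ _) (by positivity)
  · constructor
    · -- lower bound, aperture 1
      have hρ0 : (0:ℝ) < 1/(2*α) := by positivity
      have hρ1 : (1:ℝ)/(2*α) ≤ 3/8 := by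
        rw [div_le_iff₀ (by linarith : (0:ℝ) < 2*α)]; nlinarith
      have := tent_lower n hn p hp α 1 (1/(2*α)) hα one_pos hρ0 hρ1 le_rfl
      rw [← hv, ← hw] at this
      refine le_trans ?_ this
      have ha : α ^ n * (1/(2*α)) ^ n = ((1:ℝ)/2) ^ n := by
        rw [← mul_pow]; congr 1; field_simp
      rw [conv _ (by positivity) w W hwW hW.le]
      apply ENNReal.ofReal_le_ofReal
      have key : (α ^ n * (1/(2*α):ℝ) ^ n / 16 * V) ^ ((1:ℝ)/2) =
          ((1/2:ℝ)^n * V / 16) ^ ((1:ℝ)/2) := by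
        congr 1
        rw [show α ^ n * (1/(2*α):ℝ) ^ n / 16 * V = α ^ n * (1/(2*α)) ^ n * V / 16 by ring, ha]
      rw [key]
      exact (min_le_right c1 c2).trans_eq hc2
    · -- upper bound, aperture 1
      have := tent_upper n hn p hp α 1 hα one_pos (by linarith)
      rw [← hv] at this
      refine le_trans this ?_
      rw [conv _ (by positivity) v V hvV hV.le]
      apply ENNReal.ofReal_le_ofReal
      have key : ((1:ℝ) ^ n * V) ^ ((1:ℝ)/2) = V ^ ((1:ℝ)/2) := by rw [one_pow, one_mul]
      rw [key]
      exact (le_max_left C0 _).trans_eq' (by rw [hC0])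

end
end
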